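/- A distribution δ is in equilibrium if and only if it admits a decomposition (δ_i)_{i∈N} with ∑_i δ_i(x) = δ(x) for each charity x and ∑_x δ_i(x) = C_i for each agent i, such that δ_i(x) = 0 for every charity x that is not critical for agent i in δ. -/

import Mathlib

open Finset

/-- Leontief utility: minimum of `δ x / v x` over charities with positive weight. -/
noncomputable def leontief {A : Type*} [Fintype A] (v : A → ℝ)
    (h : (Finset.univ.filter fun x => 0 < v x).Nonempty) (δ : A → ℝ) : ℝ :=
  (Finset.univ.filter fun x => 0 < v x).inf' h fun x => δ x / v x

theorem stmt_5 {N A : Type*} [Fintype N] [Fintype A]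
    (C : N → ℝ) (hC : ∀ i, 0 ≤ C i)
    (v : N → A → ℝ) (hv : ∀ i x, 0 ≤ v i x)
    (hAi : ∀ i, (Finset.univ.filter fun x => 0 < v i x).Nonempty)
    (δ : A → ℝ) (hδ : ∀ x, 0 ≤ δ x) (hsum : ∑ x, δ x = ∑ i, C i) :
    -- δ is in equilibrium:
    (∃ δi : N → A → ℝ, (∀ i x, 0 ≤ δi i x) ∧ (∀ x, ∑ i, δi i x = δ x) ∧
        (∀ i, ∑ x, δi i x = C i) ∧
        (∀ i, ∀ δi' : A → ℝ, (∀ x, 0 ≤ δi' x) → (∑ x, δi' x = C i) →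
          leontief (v i) (hAi i) (fun x => δ x - δi i x + δi' x) ≤ leontief (v i) (hAi i) δ))
    ↔
    -- iff it has a decomposition in which each agent contributes only to critical charities:
    (∃ δi : N → A → ℝ, (∀ i x, 0 ≤ δi i x) ∧ (∀ x, ∑ i, δi i x = δ x) ∧
        (∀ i, ∑ x, δi i x = C i) ∧
        (∀ i x, ¬ (0 < v i x ∧ δ x / v i x = leontief (v i) (hAi i) δ) → δi i x = 0)) := by
  classical
  constructor
  · -- equilibrium → critical support
    rintro ⟨δi, hpos, hsumx, hsumi, heq⟩
    refine ⟨δi, hpos, hsumx, hsumi, ?_⟩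
    intro i x₀ hx₀
    by_contra hne
    have hpos0 : 0 < δi i x₀ := lt_of_le_of_ne (hpos i x₀) (Ne.symm hne)
    set u := leontief (v i) (hAi i) δ with hu
    have hle : ∀ x, 0 < v i x → u ≤ δ x / v i x := by
      intro x hx
      exact Finset.inf'_le _ (by simp [hx])
    obtain ⟨x₁, hx₁mem, hx₁⟩ := Finset.exists_mem_eq_inf'
      (hAi i) (fun x => δ x / v i x)
    rw [Finset.mem_filter] at hx₁mem
    have hx₁u : δ x₁ / v i x₁ = u := by rw [hu, leontief, hx₁]
    set Crit : Finset A := univ.filter (fun x => 0 < v i x ∧ δ x / v i x = u) with hCrit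
    have hx₁C : x₁ ∈ Crit := by
      simp [hCrit, hx₁mem.2, hx₁u]
    have hx₀C : x₀ ∉ Crit := by
      simp only [hCrit, mem_filter, mem_univ, true_and]
      exact hx₀
    set V : ℝ := ∑ x ∈ Crit, v i x with hV
    have hVpos : 0 < V := Finset.sum_pos (fun x hx => (Finset.mem_filter.1 hx).2.1) ⟨x₁, hx₁C⟩
    -- pick ε
    have hx₀gt : 0 < v i x₀ → u * v i x₀ < δ x₀ := by
      intro h0
      have h1 : u ≤ δ x₀ / v i x₀ := hle x₀ h0
      have h2 : δ x₀ / v i x₀ ≠ u := fun h => hx₀ ⟨h0, h⟩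
      have : u < δ x₀ / v i x₀ := lt_of_le_of_ne h1 (Ne.symm h2)
      exact (lt_div_iff₀ h0).1 this
    set ε : ℝ := if h0 : 0 < v i x₀ then min (δi i x₀) ((δ x₀ - u * v i x₀)/2) else δi i x₀
      with hε
    have hεpos : 0 < ε := by
      rw [hε]; split
      · rename_i h0
        exact lt_min hpos0 (by linarith [hx₀gt h0])
      · exact hpos0
    have hεle : ε ≤ δi i x₀ := by
      rw [hε]; split
      · exact min_le_left _ _
      · exact le_rfl
    have hεlt : 0 < v i x₀ → u * v i x₀ < δ x₀ - ε := by
      intro h0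
      have := hx₀gt h0
      have h2 : ε ≤ (δ x₀ - u * v i x₀)/2 := by rw [hε]; simp [h0]
      linarith
    set δi' : A → ℝ := fun x =>
      δi i x - (if x = x₀ then ε else 0) + (ε / V) * (if x ∈ Crit then v i x else 0)
      with hδi'
    have hεV : 0 ≤ ε / V := le_of_lt (div_pos hεpos hVpos)
    have hnn : ∀ x, 0 ≤ δi' x := by
      intro x
      by_cases hx : x = x₀
      · subst hx
        have hval : δi' x = δi i x - ε := by simp [hδi', hx₀C]
        rw [hval]; linarith
      · simp only [hδi', if_neg hx]
        have : 0 ≤ (ε / V) * (if x ∈ Crit then v i x else 0) := by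
          apply mul_nonneg hεV; split <;> [exact hv i x; exact le_rfl]
        linarith [hpos i x]
    have hsum' : ∑ x, δi' x = C i := by
      simp only [hδi']
      rw [Finset.sum_add_distrib, Finset.sum_sub_distrib, ← Finset.mul_sum]
      rw [Finset.sum_ite_eq' univ x₀ (fun _ => ε)]
      have : ∑ x, (if x ∈ Crit then v i x else 0) = V := by
        rw [hV, Finset.sum_ite_mem, Finset.univ_inter]
      rw [this, div_mul_cancel₀ _ (ne_of_gt hVpos), hsumi i]
      simp
    have hkey := heq i δi' hnn hsum'
    have hgt : u < leontief (v i) (hAi i) (fun x => δ x - δi i x + δi' x) := by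
      rw [leontief, Finset.lt_inf'_iff]
      intro x hx
      rw [Finset.mem_filter] at hx
      have hvx := hx.2
      have hform : δ x - δi i x + δi' x
          = δ x - (if x = x₀ then ε else 0) + (ε / V) * (if x ∈ Crit then v i x else 0) := by
        simp only [hδi']; ring
      rw [hform, lt_div_iff₀ hvx]
      by_cases hxC : x ∈ Crit
      · have hxne : x ≠ x₀ := fun h => hx₀C (h ▸ hxC)
        have hux : δ x / v i x = u := (Finset.mem_filter.1 hxC).2.2
        have : u * v i x = δ x := by
          field_simp at hux; linarith [hux]
        rw [if_neg hxne, if_pos hxC]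
        have : 0 < (ε / V) * v i x := mul_pos (div_pos hεpos hVpos) hvx
        nlinarith [hux, (div_eq_iff (ne_of_gt hvx)).1 hux]
      · rw [if_neg hxC, mul_zero, add_zero]
        by_cases hxx : x = x₀
        · subst hxx
          rw [if_pos rfl]
          linarith [hεlt hvx]
        · rw [if_neg hxx, sub_zero]
          have h1 : u ≤ δ x / v i x := hle x hvx
          have h2 : δ x / v i x ≠ u := by
            intro h
            exact hxC (by simp [hCrit, hvx, h])
          have : u < δ x / v i x := lt_of_le_of_ne h1 (Ne.symm h2)
          exact (lt_div_iff₀ hvx).1 this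
    linarith
  · -- critical support → equilibrium
    rintro ⟨δi, hpos, hsumx, hsumi, hsupp⟩
    refine ⟨δi, hpos, hsumx, hsumi, ?_⟩
    intro i δi' hnn hs
    by_contra hcon
    push_neg at hcon
    set u := leontief (v i) (hAi i) δ with hu
    set g : A → ℝ := fun x => δ x - δi i x + δi' x with hg
    have hgt : ∀ x, 0 < v i x → u < g x / v i x := by
      intro x hx
      calc u < leontief (v i) (hAi i) g := hcon
        _ ≤ g x / v i x := Finset.inf'_le _ (by simp [hx])
    set Crit : Finset A := univ.filter (fun x => 0 < v i x ∧ δ x / v i x = u) with hCrit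
    obtain ⟨x₁, hx₁mem, hx₁⟩ := Finset.exists_mem_eq_inf'
      (hAi i) (fun x => δ x / v i x)
    rw [Finset.mem_filter] at hx₁mem
    have hx₁u : δ x₁ / v i x₁ = u := by rw [hu, leontief, hx₁]
    have hne : Crit.Nonempty := ⟨x₁, by simp [hCrit, hx₁mem.2, hx₁u]⟩
    have hstrict : ∀ x ∈ Crit, δi i x < δi' x := by
      intro x hx
      obtain ⟨-, hvx, hux⟩ := Finset.mem_filter.1 hx
      have h1 := hgt x hvx
      rw [hg, lt_div_iff₀ hvx] at h1
      have h2 : u * v i x = δ x := ((div_eq_iff (ne_of_gt hvx)).1 hux).symm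
      simp only at h1
      linarith
    have hlt : ∑ x ∈ Crit, δi i x < ∑ x ∈ Crit, δi' x :=
      Finset.sum_lt_sum_of_nonempty hne hstrict
    have heq1 : ∑ x ∈ Crit, δi i x = C i := by
      rw [← hsumi i]
      apply Finset.sum_subset (Finset.subset_univ _)
      intro x _ hxC
      apply hsupp i x
      intro ⟨h1, h2⟩
      exact hxC (by simp [hCrit, h1, h2, ← hu])
    have hle2 : ∑ x ∈ Crit, δi' x ≤ ∑ x, δi' x :=
      Finset.sum_le_sum_of_subset_of_nonneg (Finset.subset_univ _) (fun x _ _ => hnn x)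
    rw [hs] at hle2
    linarith
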